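/- For a poset Γ, the exterior D(Γ) of totally mail-disconnected subsets of Γ (ordered by: S₁ ≤ S₂ when each element of S₁ is below some element of S₂) is a complete lattice if and only if Γ is a chainmail. -/

import Mathlib

variable {α : Type*}

/-- A totally mail-disconnected set: no two distinct elements have a common lower bound. -/
def TMD [Preorder α] (S : Set α) : Prop :=
  ∀ a ∈ S, ∀ b ∈ S, a ≠ b → ¬∃ c, c ≤ a ∧ c ≤ b

/-- The order on the exterior `D(Γ)`: `S₁ ≤ S₂` when each element of `S₁` is below
some element of `S₂`. -/
def Dle [Preorder α] (S T : Set α) : Prop :=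
  ∀ a ∈ S, ∃ b ∈ T, a ≤ b

section Aux

variable [PartialOrder α]

/-- Closure of the union of `𝒮` under joins of mails. -/
inductive ClX (𝒮 : Set (Set α)) : α → Prop
  | base {x : α} {S : Set α} (hx : x ∈ S) (hS : S ∈ 𝒮) : ClX 𝒮 x
  | join {M : Set α} {j : α} (hne : M.Nonempty) (hM : ∀ m ∈ M, ClX 𝒮 m)
      (hlb : ∃ c, ∀ m ∈ M, c ≤ m) (hj : IsLUB M j) : ClX 𝒮 j

/-- Connectedness in the comparability graph on the closure. -/
def connX (𝒮 : Set (Set α)) : α → α → Prop :=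
  Relation.ReflTransGen (fun a b => ClX 𝒮 a ∧ ClX 𝒮 b ∧ (a ≤ b ∨ b ≤ a))

lemma connX_symm {𝒮 : Set (Set α)} {x y : α} (h : connX 𝒮 x y) : connX 𝒮 y x := by
  refine (fun (_ : Std.Symm (fun a b : α => ClX 𝒮 a ∧ ClX 𝒮 b ∧ (a ≤ b ∨ b ≤ a))) =>
    Std.Symm.symm (r := Relation.ReflTransGen fun a b : α => ClX 𝒮 a ∧ ClX 𝒮 b ∧ (a ≤ b ∨ b ≤ a)) _ _ h) ⟨?_⟩
  intro a b ⟨ha, hb, hab⟩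
  exact ⟨hb, ha, hab.symm⟩

lemma connX_trans {𝒮 : Set (Set α)} {x y z : α} (h : connX 𝒮 x y) (h' : connX 𝒮 y z) :
    connX 𝒮 x z := Relation.ReflTransGen.trans h h'

variable {𝒮 : Set (Set α)}
variable (hcm : ∀ M : Set α, M.Nonempty → (∃ b, ∀ m ∈ M, b ≤ m) → ∃ j, IsLUB M j)

include hcm

/-- Any two elements of the closure with a common lower bound have a join in the closure. -/
lemma ClX.join2 {x y : α} (hx : ClX 𝒮 x) (hy : ClX 𝒮 y) (c : α) (hcx : c ≤ x) (hcy : c ≤ y) :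
    ∃ w, ClX 𝒮 w ∧ IsLUB {x, y} w := by
  obtain ⟨w, hw⟩ := hcm {x, y} ⟨x, by simp⟩ ⟨c, by simp [hcx, hcy]⟩
  refine ⟨w, ClX.join ⟨x, by simp⟩ ?_ ⟨c, by simp [hcx, hcy]⟩ hw, hw⟩
  intro m hm
  rcases hm with rfl | rfl <;> assumption

/-- Each connected component of the closure is directed. -/
lemma connX_directed {x y : α} (hx : ClX 𝒮 x) (h : connX 𝒮 x y) :
    ∃ w, ClX 𝒮 w ∧ connX 𝒮 x w ∧ x ≤ w ∧ y ≤ w := by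
  induction h with
  | refl => exact ⟨x, hx, Relation.ReflTransGen.refl, le_refl x, le_refl x⟩
  | @tail b c _ hr ih =>
    obtain ⟨hbCl, hcCl, hbc⟩ := hr
    obtain ⟨w, hwCl, hconn, hxw, hbw⟩ := ih
    rcases hbc with hbc | hcb
    · -- b ≤ c : join w and c over b
      obtain ⟨w', hw'Cl, hw'⟩ := ClX.join2 hcm hwCl hcCl b hbw hbc
      have hww' : w ≤ w' := hw'.1 (by simp)
      have hcw' : c ≤ w' := hw'.1 (by simp)
      exact ⟨w', hw'Cl,
        connX_trans hconn (Relation.ReflTransGen.single ⟨hwCl, hw'Cl, Or.inl hww'⟩),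
        le_trans hxw hww', hcw'⟩
    · exact ⟨w, hwCl, hconn, hxw, le_trans hcb hbw⟩

/-- Each connected component of the closure has a maximum (within the closure). -/
lemma connX_max {x : α} (hx : ClX 𝒮 x) :
    ∃ s, ClX 𝒮 s ∧ connX 𝒮 x s ∧ ∀ y, connX 𝒮 x y → y ≤ s := by
  set E : Set α := {e | ClX 𝒮 e ∧ connX 𝒮 x e ∧ x ≤ e} with hE
  have hxE : x ∈ E := ⟨hx, Relation.ReflTransGen.refl, le_refl x⟩
  obtain ⟨s, hs⟩ := hcm E ⟨x, hxE⟩ ⟨x, fun e he => he.2.2⟩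
  have hsCl : ClX 𝒮 s := ClX.join ⟨x, hxE⟩ (fun e he => he.1) ⟨x, fun e he => he.2.2⟩ hs
  have hxs : x ≤ s := hs.1 hxE
  refine ⟨s, hsCl, Relation.ReflTransGen.single ⟨hx, hsCl, Or.inl hxs⟩, ?_⟩
  intro y hy
  obtain ⟨w, hwCl, hconn, hxw, hyw⟩ := connX_directed hcm hx hy
  exact le_trans hyw (hs.1 ⟨hwCl, hconn, hxw⟩)

omit hcm in
/-- Every element of the closure lies below a (unique) element of any TMD upper bound. -/
lemma ClX.le_upper {J' : Set α} (hJ' : TMD J') (hD : ∀ S ∈ 𝒮, Dle S J')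
    {x : α} (hx : ClX 𝒮 x) : ∃ j ∈ J', x ≤ j := by
  induction hx with
  | @base x S hxS hS => exact hD S hS x hxS
  | @join M j hne hM hlb hj ih =>
    obtain ⟨m₀, hm₀⟩ := hne
    obtain ⟨j₀, hj₀J, hj₀⟩ := ih m₀ hm₀
    obtain ⟨c, hc⟩ := hlb
    refine ⟨j₀, hj₀J, hj.2 ?_⟩
    intro m hm
    obtain ⟨j₁, hj₁J, hj₁⟩ := ih m hm
    rcases eq_or_ne j₁ j₀ with rfl | hne'
    · exact hj₁
    · exact absurd ⟨c, le_trans (hc m hm) hj₁, le_trans (hc m₀ hm₀) hj₀⟩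
        (hJ' j₁ hj₁J j₀ hj₀J hne')

end Aux

/-- For a poset `Γ`, the exterior `D(Γ)` of totally mail-disconnected subsets is a
complete lattice (every family of totally mail-disconnected sets has a least upper
bound among the totally mail-disconnected sets) if and only if `Γ` is a chainmail
(every mail has a join). -/
theorem exterior_completeLattice_iff_chainmail [PartialOrder α] :
    (∀ 𝒮 : Set (Set α), (∀ S ∈ 𝒮, TMD S) →
      ∃ J : Set α, TMD J ∧ (∀ S ∈ 𝒮, Dle S J) ∧
        ∀ J' : Set α, TMD J' → (∀ S ∈ 𝒮, Dle S J') → Dle J J') ↔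
    (∀ M : Set α, M.Nonempty → (∃ b, ∀ m ∈ M, b ≤ m) → ∃ j, IsLUB M j) := by
  constructor
  · -- complete exterior ⇒ chainmail
    intro h M hMne hMlb
    obtain ⟨b, hb⟩ := hMlb
    obtain ⟨m₀, hm₀⟩ := hMne
    set 𝒮 : Set (Set α) := (fun m => ({m} : Set α)) '' M with h𝒮
    have h𝒮TMD : ∀ S ∈ 𝒮, TMD S := by
      rintro S ⟨m, _, rfl⟩ a ha a' ha' hne
      exact absurd (ha.trans ha'.symm) hne
    obtain ⟨J, hJTMD, hub, hleast⟩ := h 𝒮 h𝒮TMD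
    obtain ⟨j, hjJ, hj⟩ := hub {m₀} ⟨m₀, hm₀, rfl⟩ m₀ rfl
    refine ⟨j, ⟨?_, ?_⟩⟩
    · -- upper bound
      intro m hm
      obtain ⟨j', hj'J, hj'⟩ := hub {m} ⟨m, hm, rfl⟩ m rfl
      rcases eq_or_ne j' j with rfl | hne'
      · exact hj'
      · exact absurd ⟨b, le_trans (hb m hm) hj', le_trans (hb m₀ hm₀) hj⟩
          (hJTMD j' hj'J j hjJ hne')
    · -- least upper bound
      intro u hu
      have hsing : TMD ({u} : Set α) := by
        rintro a ha a' ha' hne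
        exact absurd (ha.trans ha'.symm) hne
      have hDu : ∀ S ∈ 𝒮, Dle S {u} := by
        rintro S ⟨m, hm, rfl⟩ a ha
        exact ⟨u, rfl, ha ▸ hu hm⟩
      obtain ⟨u', hu', hju'⟩ := hleast {u} hsing hDu j hjJ
      exact hu' ▸ hju'
  · -- chainmail ⇒ complete exterior
    intro hcm 𝒮 _
    refine ⟨{s | ClX 𝒮 s ∧ ∀ y, connX 𝒮 s y → y ≤ s}, ?_, ?_, ?_⟩
    · -- TMD
      rintro j₁ ⟨hj₁Cl, hj₁max⟩ j₂ ⟨hj₂Cl, hj₂max⟩ hne ⟨c, hc₁, hc₂⟩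
      obtain ⟨w, hwCl, hw⟩ := ClX.join2 hcm hj₁Cl hj₂Cl c hc₁ hc₂
      have h₁w : j₁ ≤ w := hw.1 (by simp)
      have h₂w : j₂ ≤ w := hw.1 (by simp)
      have hw₁ : w ≤ j₁ :=
        hj₁max w (Relation.ReflTransGen.single ⟨hj₁Cl, hwCl, Or.inl h₁w⟩)
      have hw₂ : w ≤ j₂ :=
        hj₂max w (Relation.ReflTransGen.single ⟨hj₂Cl, hwCl, Or.inl h₂w⟩)
      exact hne ((le_antisymm h₁w hw₁).trans (le_antisymm hw₂ h₂w))
    · -- upper bound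
      intro S hS a haS
      have haCl : ClX 𝒮 a := ClX.base haS hS
      obtain ⟨s, hsCl, hconn, hmax⟩ := connX_max hcm haCl
      refine ⟨s, ⟨hsCl, ?_⟩, hmax a Relation.ReflTransGen.refl⟩
      intro y hy
      exact hmax y (connX_trans hconn hy)
    · -- least
      rintro J' hJ' hD j ⟨hjCl, _⟩
      exact ClX.le_upper hJ' hD hjCl
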